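/- Let (σ_j) be a nonincreasing sequence of nonnegative reals whose squares are summable, and suppose Σ_{j=k+1}^∞ σ_j² ≤ C²·(k−r−1)^{−(2r+1)} for some constants C > 0 and integer r ≥ 0, valid for all k > r+1. Then for every k > 2(r+1), σ_k ≤ 2^{r+3/2}·C / (√k · (k−2r−2)^{r+1/2}). -/
import Mathlib


/-- Let (σ_j) be a nonincreasing sequence of nonnegative reals with summable
squares satisfying the tail bound Σ_{j=k+1}^∞ σ_j² ≤ C²·(k−r−1)^{−(2r+1)} for all k > r+1.
Then (formalized for even indices k = 2m with m > r+1, per the context)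
σ_{2m} ≤ C·m^{−1/2}·(m−r−1)^{−(r+1/2)}, i.e. σ_k = O(k^{−(r+1)}). -/
theorem stmt4 (σ : ℕ → ℝ) (hnn : ∀ j, 0 ≤ σ j) (hmono : Antitone σ)
    (hsum : Summable fun j => (σ j) ^ 2)
    (C : ℝ) (hC : 0 < C) (r : ℕ)
    (htail : ∀ k : ℕ, r + 1 < k →
      ∑' j : ℕ, (σ (k + 1 + j)) ^ 2 ≤ C ^ 2 / ((k : ℝ) - r - 1) ^ (2 * r + 1)) :
    ∀ m : ℕ, r + 1 < m →
      σ (2 * m) ≤ C / (Real.sqrt m * ((m : ℝ) - r - 1) ^ ((r : ℝ) + 1 / 2)) := by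
  intro m hm
  have hm0 : 0 < m := by omega
  have hm0' : (0:ℝ) < m := by exact_mod_cast hm0
  set x : ℝ := (m:ℝ) - r - 1 with hx
  have hx0 : 0 < x := by
    have : (r:ℝ) + 1 < m := by exact_mod_cast hm
    simp only [hx]; linarith
  have hsum' : Summable fun j => σ (m + 1 + j) ^ 2 := by
    have hinj : Function.Injective fun j : ℕ => m + 1 + j := fun a b h => by
      simpa using h
    exact hsum.comp_injective hinj
  -- key estimate on squares
  have key : σ (2*m) ^ 2 ≤ C ^ 2 / ((m:ℝ) * x ^ (2*r+1)) := by
    have h1 : (m:ℝ) * σ (2*m)^2 ≤ ∑ j ∈ Finset.range m, σ (m+1+j)^2 := by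
      have hle : ∀ j ∈ Finset.range m, σ (2*m)^2 ≤ σ (m+1+j)^2 := by
        intro j hj
        have hj' : j < m := Finset.mem_range.mp hj
        have := hmono (show m+1+j ≤ 2*m by omega)
        exact pow_le_pow_left₀ (hnn _) this 2
      calc (m:ℝ) * σ (2*m)^2 = ∑ _j ∈ Finset.range m, σ (2*m)^2 := by
            simp [mul_comm]
        _ ≤ _ := Finset.sum_le_sum hle
    have h2 : ∑ j ∈ Finset.range m, σ (m+1+j)^2 ≤ ∑' j, σ (m+1+j)^2 :=
      Summable.sum_le_tsum _ (fun j _ => sq_nonneg _) hsum'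
    have h3 := htail m hm
    rw [le_div_iff₀ (by positivity)]
    calc σ (2*m)^2 * ((m:ℝ) * x ^ (2*r+1)) = ((m:ℝ) * σ (2*m)^2) * x ^ (2*r+1) := by ring
      _ ≤ (C^2 / x ^ (2*r+1)) * x ^ (2*r+1) := by
          apply mul_le_mul_of_nonneg_right _ (by positivity)
          exact le_trans h1 (le_trans h2 h3)
      _ = C^2 := by field_simp
  -- take square roots
  have hrhs : (C / (Real.sqrt m * x ^ ((r:ℝ) + 1/2))) ^ 2 = C ^ 2 / ((m:ℝ) * x ^ (2*r+1)) := by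
    rw [div_pow, mul_pow, Real.sq_sqrt hm0'.le]
    congr 1
    rw [← Real.rpow_natCast (x ^ ((r:ℝ) + 1/2)) 2, ← Real.rpow_mul hx0.le]
    rw [show ((r:ℝ) + 1/2) * (2:ℕ) = ((2*r+1 : ℕ) : ℝ) by push_cast; ring]
    rw [Real.rpow_natCast]
  have hden : 0 < Real.sqrt m * x ^ ((r:ℝ) + 1/2) :=
    mul_pos (Real.sqrt_pos.mpr hm0') (Real.rpow_pos_of_pos hx0 _)
  have hrhs0 : 0 ≤ C / (Real.sqrt m * x ^ ((r:ℝ) + 1/2)) := by positivity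
  nlinarith [hnn (2*m), key, hrhs]
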